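/- For a Kolmogorov matrix C, the matrix exponential e^{tC} has nonnegative entries for all t ≥ 0, and the all-ones row vector satisfies 1·e^{tC} = 1·, i.e., e^{tC} preserves column sums (is column-stochastic in the sense that each column of e^{tC} sums to 1). -/

import Mathlib

open Matrix

section Aux

variable {n : ℕ}

/-- Entries of powers of an entrywise-nonnegative matrix are nonnegative. -/
lemma pow_entry_nonneg {A : Matrix (Fin n) (Fin n) ℝ} (hA : ∀ i j, 0 ≤ A i j) :
    ∀ (k : ℕ) (i j), 0 ≤ (A ^ k) i j := by
  intro k
  induction k with
  | zero =>
    intro i j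
    simp only [pow_zero, Matrix.one_apply]
    split <;> norm_num
  | succ m ih =>
    intro i j
    rw [pow_succ, Matrix.mul_apply]
    exact Finset.sum_nonneg fun l _ => mul_nonneg (ih i l) (hA l j)

/-- The entry evaluation as a continuous linear map. -/
noncomputable def entryCLM (i j : Fin n) : Matrix (Fin n) (Fin n) ℝ →L[ℝ] ℝ :=
  LinearMap.toContinuousLinearMap
    { toFun := fun M => M i j
      map_add' := fun _ _ => rfl
      map_smul' := fun _ _ => rfl }

@[simp] lemma entryCLM_apply (i j : Fin n) (M : Matrix (Fin n) (Fin n) ℝ) :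
    entryCLM i j M = M i j := rfl

/-- Left multiplication by a fixed row vector as a continuous linear map. -/
noncomputable def vecMulCLM (v : Fin n → ℝ) :
    Matrix (Fin n) (Fin n) ℝ →L[ℝ] (Fin n → ℝ) :=
  LinearMap.toContinuousLinearMap
    { toFun := fun M => v ᵥ* M
      map_add' := fun A B => by
        ext j
        simp [Matrix.vecMul, dotProduct, mul_add, Finset.sum_add_distrib]
      map_smul' := fun c A => by
        ext j
        simp [Matrix.vecMul, dotProduct, Finset.mul_sum, mul_left_comm] }

@[simp] lemma vecMulCLM_apply (v : Fin n → ℝ) (M : Matrix (Fin n) (Fin n) ℝ) :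
    vecMulCLM v M = v ᵥ* M := rfl

end Aux

/-- For a Kolmogorov matrix `C`, the matrix exponential `e^{tC}` has
nonnegative entries for all `t ≥ 0`, and each column of `e^{tC}` sums to `1`
(equivalently, the all-ones row vector is a fixed left vector of `e^{tC}`). -/
theorem kolmogorov_exp_nonneg_column_stochastic (n : ℕ)
    (C : Matrix (Fin n) (Fin n) ℝ)
    (hoff : ∀ i j, i ≠ j → 0 ≤ C i j)
    (hcol : ∀ j, ∑ i, C i j = 0) :
    ∀ t : ℝ, 0 ≤ t →
      (∀ i j, 0 ≤ NormedSpace.exp (t • C) i j) ∧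
      (fun _ : Fin n => (1 : ℝ)) ᵥ* NormedSpace.exp (t • C) =
        (fun _ : Fin n => (1 : ℝ)) := by
  intro t ht
  letI : SeminormedRing (Matrix (Fin n) (Fin n) ℝ) := Matrix.linftyOpSemiNormedRing
  letI : NormedRing (Matrix (Fin n) (Fin n) ℝ) := Matrix.linftyOpNormedRing
  letI : NormedAlgebra ℝ (Matrix (Fin n) (Fin n) ℝ) := Matrix.linftyOpNormedAlgebra
  constructor
  · -- nonnegativity
    -- diagonal entries of C are ≤ 0, pick s making B = C + s • 1 nonnegative
    set s : ℝ := -∑ i, C i i with hs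
    have hdiag : ∀ j, C j j ≤ 0 := by
      intro j
      have h := hcol j
      have : C j j = -∑ i ∈ Finset.univ.erase j, C i j := by
        rw [← Finset.add_sum_erase _ _ (Finset.mem_univ j)] at h
        linarith
      rw [this]
      simp only [neg_nonpos]
      exact Finset.sum_nonneg fun i hi => hoff i j (Finset.ne_of_mem_erase hi)
    have hsge : ∀ j, -C j j ≤ s := by
      intro j
      rw [hs, ← Finset.sum_neg_distrib]
      exact Finset.single_le_sum (f := fun i => -C i i)
        (fun i _ => neg_nonneg.mpr (hdiag i)) (Finset.mem_univ j)
    set B : Matrix (Fin n) (Fin n) ℝ := C + s • 1 with hB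
    have hBnn : ∀ i j, 0 ≤ B i j := by
      intro i j
      by_cases hij : i = j
      · subst hij
        simp only [hB, Matrix.add_apply, Matrix.smul_apply, Matrix.one_apply_eq, smul_eq_mul,
          mul_one]
        linarith [hsge i]
      · simp only [hB, Matrix.add_apply, Matrix.smul_apply, Matrix.one_apply_ne hij,
          smul_eq_mul, mul_zero, add_zero]
        exact hoff i j hij
    have htB : ∀ i j, 0 ≤ (t • B) i j := by
      intro i j
      simpa using mul_nonneg ht (hBnn i j)
    -- exp (t • C) = Real.exp (-(t*s)) • exp (t • B)
    have hsplit : t • C = t • B + (-(t * s)) • (1 : Matrix (Fin n) (Fin n) ℝ) := by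
      rw [hB]
      rw [smul_add, smul_smul]
      ring_nf
      module
    have hcomm : Commute (t • B) ((-(t * s)) • (1 : Matrix (Fin n) (Fin n) ℝ)) :=
      (Commute.one_right (t • B)).smul_right _
    have hexp1 : NormedSpace.exp ((-(t * s)) • (1 : Matrix (Fin n) (Fin n) ℝ)) =
        Real.exp (-(t * s)) • (1 : Matrix (Fin n) (Fin n) ℝ) := by
      have halg : (-(t * s)) • (1 : Matrix (Fin n) (Fin n) ℝ) =
          algebraMap ℝ (Matrix (Fin n) (Fin n) ℝ) (-(t * s)) := by
        rw [Algebra.algebraMap_eq_smul_one]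
      rw [halg]
      erw [← NormedSpace.algebraMap_exp_comm (𝕂 := ℝ) (𝔸 := Matrix (Fin n) (Fin n) ℝ)]
      rw [Algebra.algebraMap_eq_smul_one,
        Real.exp_eq_exp_ℝ]
    have hmain : NormedSpace.exp (t • C) =
        Real.exp (-(t * s)) • NormedSpace.exp (t • B) := by
      rw [hsplit, Matrix.exp_add_of_commute _ _ hcomm, hexp1]
      rw [mul_smul_comm, mul_one]
    intro i j
    rw [hmain]
    have hBsum : Summable fun k : ℕ => ((k.factorial : ℝ)⁻¹) • (t • B) ^ k :=
      NormedSpace.expSeries_summable' (𝕂 := ℝ) (t • B)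
    have hBexp : NormedSpace.exp (t • B) i j =
        ∑' k : ℕ, ((k.factorial : ℝ)⁻¹) • ((t • B) ^ k) i j := by
      have := (entryCLM i j).map_tsum hBsum
      simpa [NormedSpace.exp_eq_tsum ℝ] using this
    have hterm : ∀ k : ℕ, 0 ≤ ((k.factorial : ℝ)⁻¹) • ((t • B) ^ k) i j := fun k =>
      smul_nonneg (by positivity) (pow_entry_nonneg htB k i j)
    have : 0 ≤ NormedSpace.exp (t • B) i j := by
      rw [hBexp]; exact tsum_nonneg hterm
    simpa using mul_nonneg (Real.exp_pos _).le this
  · -- column sums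
    have hsum : Summable fun k : ℕ => ((k.factorial : ℝ)⁻¹) • (t • C) ^ k :=
      NormedSpace.expSeries_summable' (𝕂 := ℝ) (t • C)
    have hvC : (fun _ : Fin n => (1 : ℝ)) ᵥ* C = 0 := by
      ext j
      simpa [Matrix.vecMul, dotProduct] using hcol j
    have hvCk : ∀ k : ℕ, k ≠ 0 → (fun _ : Fin n => (1 : ℝ)) ᵥ* ((t • C) ^ k) = 0 := by
      intro k hk
      obtain ⟨m, rfl⟩ := Nat.exists_eq_succ_of_ne_zero hk
      rw [pow_succ']
      rw [← Matrix.vecMul_vecMul]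
      have : (fun _ : Fin n => (1 : ℝ)) ᵥ* (t • C) = 0 := by
        rw [← vecMulCLM_apply, _root_.map_smul, vecMulCLM_apply, hvC, smul_zero]
      rw [this, Matrix.zero_vecMul]
    have hmap := (vecMulCLM (n := n) (fun _ => (1 : ℝ))).map_tsum hsum
    rw [NormedSpace.exp_eq_tsum ℝ]
    beta_reduce
    rw [← vecMulCLM_apply (fun _ : Fin n => (1 : ℝ)), hmap]
    rw [tsum_eq_single 0 (by
      intro k hk
      rw [_root_.map_smul, vecMulCLM_apply, hvCk k hk, smul_zero])]
    simp [Matrix.vecMul_one]
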